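/- Let 𝒜 be a uniform algebra on a compact Hausdorff space X, f ∈ 𝒜, and x₀ a point of the Choquet boundary of 𝒜 with f(x₀) ≠ 0. Then there exists u ∈ 𝒜, invertible in 𝒜, with σ_π(u) = {1}, u(x₀) = 1, and σ_π(fu) = {f(x₀)}. -/

import Mathlib

/-- The peripheral spectrum of a continuous function on a compact space. -/
noncomputable def perSpec {X : Type*} [TopologicalSpace X] [CompactSpace X]
    (f : C(X, ℂ)) : Set ℂ :=
  {z | z ∈ Set.range f ∧ ‖z‖ = ‖f‖}

/-- A peak set for a subalgebra of C(X, ℂ). -/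
def IsPeakSet {X : Type*} [TopologicalSpace X] [CompactSpace X]
    (A : Subalgebra ℂ C(X, ℂ)) (E : Set X) : Prop :=
  ∃ f ∈ A, perSpec f = {1} ∧ E = f ⁻¹' {1}

/-- The Choquet boundary (set of p-points): points x such that {x} is an
intersection of peak sets. -/
def ChoquetBdry {X : Type*} [TopologicalSpace X] [CompactSpace X]
    (A : Subalgebra ℂ C(X, ℂ)) : Set X :=
  {x | ∃ P : Set (Set X), (∀ E ∈ P, IsPeakSet A E) ∧ ⋂₀ P = {x}}


section Aux
variable {X : Type*} [TopologicalSpace X] [CompactSpace X]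

lemma expMemClosed (A : Subalgebra ℂ C(X, ℂ)) (hA : IsClosed (A : Set C(X, ℂ)))
    {a : C(X, ℂ)} (ha : a ∈ A) : NormedSpace.exp a ∈ A := by
  have hsum : HasSum (fun n => ((n.factorial : ℂ))⁻¹ • a ^ n) (NormedSpace.exp a) :=
    NormedSpace.exp_series_hasSum_exp' a
  refine hA.mem_of_tendsto hsum.tendsto_sum_nat (Filter.Eventually.of_forall fun s => ?_)
  exact sum_mem fun n _ => Subalgebra.smul_mem A (pow_mem ha n) _

lemma exp_apply' (a : C(X, ℂ)) (x : X) :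
    NormedSpace.exp a x = Complex.exp (a x) := by
  have h := NormedSpace.map_exp (ContinuousMap.evalAlgHom ℂ ℂ x)
      (continuous_eval_const x) a
  simpa [Complex.exp_eq_exp_ℂ] using h

lemma norm_tsum_le' {f : ℕ → ℂ} {a : ℂ} {g : ℕ → ℝ} {s : ℝ} (hf : HasSum f a)
    (hg : HasSum g s) (h : ∀ n, ‖f n‖ ≤ g n) : ‖a‖ ≤ s := by
  have hsf : Summable fun n => ‖f n‖ :=
    Summable.of_nonneg_of_le (fun n => norm_nonneg _) h hg.summable
  calc ‖a‖ = ‖∑' n, f n‖ := by rw [hf.tsum_eq]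
    _ ≤ ∑' n, ‖f n‖ := norm_tsum_le_tsum_norm hsf
    _ ≤ ∑' n, g n := hsf.tsum_le_tsum h hg.summable
    _ = s := hg.tsum_eq

lemma geomHalf : HasSum (fun n : ℕ => (2⁻¹ : ℝ) ^ (n + 1)) 1 := by
  have h := hasSum_geometric_of_lt_one (by norm_num : (0:ℝ) ≤ 2⁻¹) (by norm_num : (2⁻¹:ℝ) < 1)
  have h2 := h.mul_left (2⁻¹ : ℝ)
  have h3 : (2⁻¹:ℝ) * (1 - 2⁻¹)⁻¹ = 1 := by norm_num
  rw [h3] at h2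
  rw [show (fun n : ℕ => (2⁻¹ : ℝ) ^ (n + 1)) = fun i => 2⁻¹ * 2⁻¹ ^ i from
    funext fun n => pow_succ' _ _]
  exact h2

lemma geomHalfC : HasSum (fun n : ℕ => (2⁻¹ : ℂ) ^ (n + 1)) 1 := by
  have h := hasSum_geometric_of_norm_lt_one (by norm_num : ‖(2⁻¹:ℂ)‖ < 1)
  have h2 := h.mul_left (2⁻¹ : ℂ)
  have : (2⁻¹ : ℂ) * (1 - 2⁻¹)⁻¹ = 1 := by norm_num
  rw [this] at h2
  rw [show (fun n : ℕ => (2⁻¹ : ℂ) ^ (n + 1)) = fun i => 2⁻¹ * 2⁻¹ ^ i from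
    funext fun n => pow_succ' _ _]
  exact h2

lemma geomHalfPartial (N : ℕ) :
    ∑ i ∈ Finset.range N, (2⁻¹ : ℝ) ^ (i + 1) = 1 - 2⁻¹ ^ N := by
  induction N with
  | zero => simp
  | succ n ih => rw [Finset.sum_range_succ, ih, pow_succ]; ring

lemma dsum (N : ℕ) :
    HasSum (fun n : ℕ => if n < N then (2⁻¹:ℝ)^(n+1) else 2⁻¹^(n+2))
      (1 - 2⁻¹^(N+1)) := by
  set d : ℕ → ℝ := fun n => if n < N then (2⁻¹:ℝ)^(n+1) else 2⁻¹^(n+2) with hd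
  have hle : ∀ n, d n ≤ (2⁻¹:ℝ)^(n+1) := by
    intro n
    by_cases h : n < N
    · simp [hd, h]
    · simp only [hd, h, if_false]
      have h1 : (0:ℝ) < 2⁻¹ := by norm_num
      have := pow_pos h1 (n+1)
      rw [pow_succ]
      nlinarith
  have h0 : ∀ n, 0 ≤ d n := by
    intro n; by_cases h : n < N <;> simp [hd, h] <;> positivity
  have hsumm : Summable d :=
    Summable.of_nonneg_of_le h0 hle geomHalf.summable
  rw [Summable.hasSum_iff hsumm]
  have hsplit := Summable.sum_add_tsum_nat_add N hsumm
  rw [← hsplit]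
  have hfin : ∑ i ∈ Finset.range N, d i = 1 - 2⁻¹ ^ N := by
    rw [← geomHalfPartial N]
    exact Finset.sum_congr rfl fun i hi => by
      simp [hd, Finset.mem_range.mp hi]
  have htail : ∑' i : ℕ, d (i + N) = 2⁻¹ ^ (N + 1) := by
    have : ∀ i : ℕ, d (i + N) = 2⁻¹^(N+2) * 2⁻¹^i := by
      intro i
      have : ¬ (i + N < N) := by omega
      simp only [hd, this, if_false]
      rw [← pow_add]; ring_nf
    rw [tsum_congr this, tsum_mul_left, tsum_geometric_of_lt_one (by norm_num) (by norm_num)]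
    rw [pow_succ]
    norm_num
    ring
  rw [hfin, htail, pow_succ]
  ring

end Aux

section Peak
variable {X : Type*} [TopologicalSpace X] [CompactSpace X]

lemma peak_norm_one {φ : C(X, ℂ)} (h : perSpec φ = {1}) : ‖φ‖ = 1 := by
  have h1 : (1:ℂ) ∈ perSpec φ := by rw [h]; rfl
  have := h1.2
  simpa using this.symm

lemma peak_lt_one {φ : C(X, ℂ)} (h : perSpec φ = {1}) {x : X} (hx : φ x ≠ 1) :
    ‖φ x‖ < 1 := by
  rcases lt_or_eq_of_le ((φ.norm_coe_le_norm x).trans_eq (peak_norm_one h)) with h1 | h1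
  · exact h1
  · exfalso
    apply hx
    have : φ x ∈ perSpec φ := ⟨⟨x, rfl⟩, by rw [h1, peak_norm_one h]⟩
    rw [h] at this
    exact this

lemma peak_small (A : Subalgebra ℂ C(X, ℂ)) (x₀ : X) (hx₀ : x₀ ∈ ChoquetBdry A)
    {U : Set X} (hU : IsOpen U) (hxU : x₀ ∈ U) :
    ∃ g ∈ A, ‖g‖ ≤ 1 ∧ g x₀ = 1 ∧ ∀ x, x ∉ U → ‖g x‖ ≤ 1/2 := by
  classical
  obtain ⟨P, hP, hPint⟩ := hx₀
  have hx0P : ∀ E ∈ P, x₀ ∈ E := by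
    intro E hE
    have hx : x₀ ∈ ⋂₀ P := by rw [hPint]; rfl
    exact hx E hE
  choose φ hφA hφspec hφE using hP
  -- compactness argument
  have hSc : IsCompact Uᶜ := hU.isClosed_compl.isCompact
  have hZc : ∀ E : P, IsClosed (E : Set X) := by
    rintro ⟨E, hE⟩
    show IsClosed E
    rw [hφE E hE]
    exact (isClosed_singleton).preimage (φ E hE).continuous
  have hempty : Uᶜ ∩ ⋂ E : P, (E : Set X) = ∅ := by
    rw [← Set.sInter_eq_iInter, hPint]
    ext x
    simp only [Set.mem_inter_iff, Set.mem_compl_iff, Set.mem_singleton_iff, Set.mem_empty_iff_false,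
      iff_false, not_and]
    rintro hxu rfl
    exact hxu hxU
  obtain ⟨t, ht⟩ := hSc.elim_finite_subfamily_closed _ hZc hempty
  set h : C(X, ℂ) := ∏ E ∈ t, φ E E.2 with hh
  have happly : ∀ x, h x = ∏ E ∈ t, φ E E.2 x := by
    intro x
    rw [hh]
    exact map_prod (ContinuousMap.evalAlgHom ℂ ℂ x) _ t
  have hhA : h ∈ A := prod_mem fun E _ => hφA E E.2
  have hhx₀ : h x₀ = 1 := by
    rw [happly]
    apply Finset.prod_eq_one
    intro E _
    have := hx0P E E.2
    rw [hφE E E.2] at this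
    exact this
  have hhle : ∀ x, ‖h x‖ ≤ 1 := by
    intro x
    rw [happly, norm_prod]
    refine Finset.prod_le_one (fun E _ => norm_nonneg _) (fun E _ => ?_)
    calc ‖φ E E.2 x‖ ≤ ‖φ E E.2‖ := ContinuousMap.norm_coe_le_norm _ x
      _ = 1 := peak_norm_one (hφspec E E.2)
  have hhlt : ∀ x, x ∉ U → ‖h x‖ < 1 := by
    intro x hx
    have hxt : x ∉ ⋂ E ∈ t, (E : Set X) := by
      intro hmem
      have : x ∈ Uᶜ ∩ ⋂ E ∈ t, (E : Set X) := ⟨hx, hmem⟩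
      rw [ht] at this
      exact this
    simp only [Set.mem_iInter, not_forall] at hxt
    obtain ⟨E, hEt, hxE⟩ := hxt
    have hne : φ E E.2 x ≠ 1 := by
      intro heq
      apply hxE
      rw [hφE E E.2]
      exact heq
    rw [happly, norm_prod]
    rw [← Finset.mul_prod_erase _ _ hEt]
    have h1 : ‖φ E E.2 x‖ < 1 := peak_lt_one (hφspec E E.2) hne
    have h2 : ∏ F ∈ t.erase E, ‖φ F F.2 x‖ ≤ 1 :=
      Finset.prod_le_one (fun F _ => norm_nonneg _) (fun F _ => by
        calc ‖φ F F.2 x‖ ≤ ‖φ F F.2‖ := ContinuousMap.norm_coe_le_norm _ x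
          _ = 1 := peak_norm_one (hφspec F F.2))
    have h3 : (0:ℝ) ≤ ‖φ E E.2 x‖ := norm_nonneg _
    nlinarith [Finset.prod_nonneg (fun F (_ : F ∈ t.erase E) => norm_nonneg (φ F F.2 x))]
  -- now take a power
  by_cases hne : (Uᶜ : Set X).Nonempty
  · obtain ⟨z, hzS, hz⟩ := hSc.exists_isMaxOn hne (by fun_prop : ContinuousOn (fun x => ‖h x‖) Uᶜ)
    set m := ‖h z‖ with hm
    have hm0 : 0 ≤ m := norm_nonneg _
    have hm1 : m < 1 := hhlt z hzS
    obtain ⟨k, hk⟩ := exists_pow_lt_of_lt_one (by norm_num : (0:ℝ) < 1/2) hm1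
    refine ⟨h ^ k, pow_mem hhA k, ?_, ?_, ?_⟩
    · rw [ContinuousMap.norm_le _ zero_le_one]
      intro x
      rw [ContinuousMap.pow_apply, norm_pow]
      exact pow_le_one₀ (norm_nonneg _) (hhle x)
    · rw [ContinuousMap.pow_apply, hhx₀, one_pow]
    · intro x hx
      rw [ContinuousMap.pow_apply, norm_pow]
      calc ‖h x‖ ^ k ≤ m ^ k := pow_le_pow_left₀ (norm_nonneg _) (hz hx) k
        _ ≤ 1/2 := hk.le
  · refine ⟨h, hhA, ?_, hhx₀, ?_⟩
    · rw [ContinuousMap.norm_le _ zero_le_one]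
      exact hhle
    · intro x hx
      exact absurd ⟨x, hx⟩ hne

end Peak

lemma exp_bound_aux {K t : ℝ} (hK : 4 ≤ K) (ht : 0 < t) :
    (1 + 2*t) * Real.exp (-(K*t)) ≤ 1 := by
  have h4 : 1 + 2*t ≤ Real.exp (K*t) := by
    nlinarith [Real.add_one_le_exp (K*t)]
  rw [Real.exp_neg]
  have hp := Real.exp_pos (K*t)
  calc (1+2*t) * (Real.exp (K*t))⁻¹ ≤ Real.exp (K*t) * (Real.exp (K*t))⁻¹ :=
        mul_le_mul_of_nonneg_right h4 (inv_nonneg.mpr hp.le)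
    _ = 1 := mul_inv_cancel₀ hp.ne'


/-- Bishop-type lemma: given f in a uniform algebra and a Choquet boundary point x₀ with
f(x₀) ≠ 0, there is an invertible peaking function u at x₀ with σ_π(fu) = {f(x₀)}. -/
theorem stmt8 {X : Type*} [TopologicalSpace X] [CompactSpace X]
    (A : Subalgebra ℂ C(X, ℂ))
    (hA : IsClosed (A : Set C(X, ℂ)))
    (hAsep : ∀ x x' : X, x ≠ x' → ∃ f ∈ A, f x ≠ f x')
    (f : C(X, ℂ)) (hf : f ∈ A) (x₀ : X) (hx₀ : x₀ ∈ ChoquetBdry A)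
    (hfx₀ : f x₀ ≠ 0) :
    ∃ u : C(X, ℂ), u ∈ A ∧ (∃ v ∈ A, u * v = 1) ∧
      perSpec u = {1} ∧ u x₀ = 1 ∧ perSpec (f * u) = {f x₀} := by
  classical
  set R := ‖f x₀‖ with hRdef
  have hR : 0 < R := norm_pos_iff.mpr hfx₀
  set M := ‖f‖ with hMdef
  have hRM : R ≤ M := f.norm_coe_le_norm x₀
  have hM : 0 < M := hR.trans_le hRM
  set V : ℕ → Set X := fun n => {x | ‖f x - f x₀‖ < R * 2⁻¹ ^ (n+1)} with hVdef
  have hVopen : ∀ n, IsOpen (V n) := fun n =>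
    isOpen_lt (((map_continuous f).sub continuous_const).norm) continuous_const
  have hVmem : ∀ n, x₀ ∈ V n := by
    intro n
    show ‖f x₀ - f x₀‖ < R * 2⁻¹ ^ (n+1)
    simp only [sub_self, norm_zero]
    exact mul_pos hR (pow_pos (by norm_num) _)
  have hVanti : ∀ m n, m ≤ n → V n ⊆ V m := by
    intro m n hmn x hx
    have hx' : ‖f x - f x₀‖ < R * 2⁻¹ ^ (n+1) := hx
    have hp : (2⁻¹:ℝ) ^ (n+1) ≤ 2⁻¹ ^ (m+1) :=
      pow_le_pow_of_le_one (by norm_num) (by norm_num) (by omega)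
    show ‖f x - f x₀‖ < R * 2⁻¹ ^ (m+1)
    nlinarith
  choose g hgA hgnorm hgx₀ hgsmall using fun n => peak_small A x₀ hx₀ (hVopen n) (hVmem n)
  set c : ℕ → ℂ := fun n => (2⁻¹:ℂ)^(n+1) with hc
  have hcnorm : ∀ n, ‖c n‖ = (2⁻¹:ℝ)^(n+1) := by
    intro n
    rw [hc]
    simp [norm_pow]
  have hsummable : Summable (fun n => c n • g n) := by
    refine Summable.of_norm_bounded geomHalf.summable ?_
    intro n
    rw [norm_smul, hcnorm]
    have h1 := pow_pos (show (0:ℝ) < 2⁻¹ by norm_num) (n+1)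
    nlinarith [hgnorm n]
  set w : C(X, ℂ) := ∑' n, c n • g n with hw
  have hwsum : HasSum (fun n => c n • g n) w := hsummable.hasSum
  have hwA : w ∈ A :=
    hA.mem_of_tendsto hwsum.tendsto_sum_nat
      (Filter.Eventually.of_forall fun s => sum_mem fun n _ => A.smul_mem (hgA n) _)
  have hwapp : ∀ x, HasSum (fun n => c n * g n x) (w x) := by
    intro x
    have h := hwsum.mapL (ContinuousMap.evalCLM ℂ x)
    simpa [smul_eq_mul] using h
  have hwx₀ : w x₀ = 1 := by
    have h1 : HasSum (fun n => c n * g n x₀) 1 := by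
      simpa [hc, hgx₀] using geomHalfC
    exact (hwapp x₀).unique h1
  have hwnorm : ∀ x, ‖w x‖ ≤ 1 := by
    intro x
    refine norm_tsum_le' (hwapp x) geomHalf ?_
    intro n
    rw [norm_mul, hcnorm]
    have h2 : ‖g n x‖ ≤ 1 := (ContinuousMap.norm_coe_le_norm (g n) x).trans (hgnorm n)
    have h1 := pow_pos (show (0:ℝ) < 2⁻¹ by norm_num) (n+1)
    nlinarith
  have hwkey : ∀ (x : X) (N : ℕ), x ∉ V N → ‖w x‖ ≤ 1 - (2⁻¹:ℝ)^(N+1) := by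
    intro x N hxN
    refine norm_tsum_le' (hwapp x) (dsum N) ?_
    intro n
    rw [norm_mul, hcnorm]
    have h1 := pow_pos (show (0:ℝ) < 2⁻¹ by norm_num) (n+1)
    by_cases hn : n < N
    · simp only [hn, if_true]
      have h2 : ‖g n x‖ ≤ 1 := (ContinuousMap.norm_coe_le_norm (g n) x).trans (hgnorm n)
      nlinarith
    · simp only [hn, if_false]
      have hxn : x ∉ V n := fun hmem => hxN (hVanti N n (by omega) hmem)
      have h2 : ‖g n x‖ ≤ 1/2 := hgsmall n x hxn
      rw [pow_succ _ (n+1)]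
      nlinarith
  set K : ℝ := max 4 (2 * Real.log (M/R) + 2) with hK
  have hK4 : (4:ℝ) ≤ K := le_max_left _ _
  have hK0 : (0:ℝ) < K := by linarith
  have hKM : M * Real.exp (-(K/2)) < R := by
    have hlog : Real.log (M/R) < K/2 := by
      have h := le_max_right 4 (2 * Real.log (M/R) + 2)
      rw [← hK] at h
      linarith
    have h1 : Real.exp (-(K/2)) < Real.exp (-Real.log (M/R)) :=
      Real.exp_lt_exp.mpr (by linarith)
    have h2 : Real.exp (-Real.log (M/R)) = R/M := by
      rw [Real.exp_neg, Real.exp_log (by positivity), inv_div]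
    rw [h2] at h1
    calc M * Real.exp (-(K/2)) < M * (R/M) := mul_lt_mul_of_pos_left h1 hM
      _ = R := by field_simp
  set a : C(X, ℂ) := (K:ℂ) • (w - 1) with ha
  set u : C(X, ℂ) := NormedSpace.exp a with hu
  set v : C(X, ℂ) := NormedSpace.exp (-a) with hv
  have haA : a ∈ A := A.smul_mem (A.sub_mem hwA A.one_mem) _
  have huA : u ∈ A := expMemClosed A hA haA
  have hvA : v ∈ A := expMemClosed A hA (A.neg_mem haA)
  have huv : u * v = 1 := by
    rw [hu, hv, ← NormedSpace.exp_add_of_commute (Commute.all a (-a)), add_neg_cancel,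
      NormedSpace.exp_zero]
  clear_value w a u v
  have huapp : ∀ x, u x = Complex.exp ((K:ℂ) * (w x - 1)) := by
    intro x
    rw [hu, exp_apply']
    congr 1
    rw [ha]
    simp [smul_eq_mul]
  have hunorm : ∀ x, ‖u x‖ = Real.exp (K * ((w x).re - 1)) := by
    intro x
    rw [huapp x, Complex.norm_exp]
    congr 1
    simp [Complex.mul_re]
  have hule : ∀ x, ‖u x‖ ≤ 1 := by
    intro x
    rw [hunorm x, Real.exp_le_one_iff]
    have h1 : (w x).re ≤ 1 := (Complex.re_le_norm _).trans
      (by exact hwnorm x)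
    nlinarith
  have hux₀ : u x₀ = 1 := by
    rw [huapp x₀, hwx₀]
    simp
  have hu1 : ∀ x, ‖u x‖ = 1 → u x = 1 := by
    intro x hx
    rw [hunorm x, Real.exp_eq_one_iff] at hx
    have hre : (w x).re = 1 := by
      rcases mul_eq_zero.mp hx with h | h
      · exact absurd h hK0.ne'
      · linarith [sub_eq_zero.mp h]
    have habs : ‖w x‖ ≤ 1 := by
      exact hwnorm x
    have him : (w x).im = 0 := by
      have h1 := Complex.sq_norm (w x)
      have h2 : Complex.normSq (w x) = (w x).re * (w x).re + (w x).im * (w x).im :=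
        Complex.normSq_apply _
      have h3 : (w x).im * (w x).im ≤ 0 := by
        nlinarith [norm_nonneg (w x)]
      exact mul_self_eq_zero.mp (le_antisymm h3 (mul_self_nonneg _))
    have hw1 : w x = 1 := by
      apply Complex.ext
      · simpa using hre
      · simpa using him
    rw [huapp x, hw1]
    simp
  have hunorm1 : ‖u‖ = 1 := by
    apply le_antisymm
    · rw [ContinuousMap.norm_le _ zero_le_one]
      exact hule
    · calc (1:ℝ) = ‖u x₀‖ := by rw [hux₀]; simp
        _ ≤ ‖u‖ := ContinuousMap.norm_coe_le_norm u x₀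
  have hperu : perSpec u = {1} := by
    ext z
    simp only [perSpec, Set.mem_setOf_eq, Set.mem_singleton_iff]
    constructor
    · rintro ⟨⟨x, rfl⟩, hz⟩
      rw [hunorm1] at hz
      exact hu1 x hz
    · rintro rfl
      exact ⟨⟨x₀, hux₀⟩, by rw [hunorm1, norm_one]⟩
  have hclaim : ∀ x, ‖f x * u x‖ ≤ R ∧ (‖f x * u x‖ = R → f x * u x = f x₀) := by
    intro x
    by_cases hall : ∀ n, x ∈ V n
    · have hfx : f x = f x₀ := by
        by_contra hne
        have hpos : 0 < ‖f x - f x₀‖ := by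
          rw [norm_pos_iff, sub_ne_zero]; exact hne
        obtain ⟨n, hn⟩ := exists_pow_lt_of_lt_one (div_pos hpos hR)
          (by norm_num : (2⁻¹:ℝ) < 1)
        have h1 : ‖f x - f x₀‖ < R * 2⁻¹ ^ (n+1) := hall n
        have h2 : (2⁻¹:ℝ)^(n+1) ≤ 2⁻¹^n :=
          pow_le_pow_of_le_one (by norm_num) (by norm_num) (by omega)
        have h3 : 2⁻¹^n * R < ‖f x - f x₀‖ := (lt_div_iff₀ hR).mp hn
        nlinarith
      constructor
      · rw [norm_mul, hfx, ← hRdef]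
        nlinarith [hule x, norm_nonneg (u x)]
      · intro heq
        rw [norm_mul, hfx, ← hRdef] at heq
        have hux : ‖u x‖ = 1 := by
          have h1 := hule x
          have h2 := norm_nonneg (u x)
          nlinarith
        rw [hfx, hu1 x hux, mul_one]
    · push_neg at hall
      have hlt : ‖f x * u x‖ < R := by
        obtain ⟨N, hxN, hNm⟩ : ∃ N, x ∉ V N ∧ ∀ m, m < N → x ∈ V m :=
          ⟨Nat.find hall, Nat.find_spec hall, fun m hm => not_not.mp (Nat.find_min hall hm)⟩
        have hwb := hwkey x N hxN
        set t : ℝ := (2⁻¹:ℝ)^(N+1) with htd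
        have ht0 : 0 < t := pow_pos (by norm_num) _
        have hre2 : (w x).re ≤ 1 - t := (Complex.re_le_norm _).trans
          (by exact hwb)
        have huxb : ‖u x‖ ≤ Real.exp (-(K * t)) := by
          rw [hunorm x]
          apply Real.exp_le_exp.mpr
          nlinarith
        rcases Nat.eq_zero_or_pos N with hN0 | hNpos
        · have hfM : ‖f x‖ ≤ M := f.norm_coe_le_norm x
          have ht : t = 2⁻¹ := by rw [htd, hN0]; norm_num
          calc ‖f x * u x‖ = ‖f x‖ * ‖u x‖ := norm_mul _ _
            _ ≤ M * Real.exp (-(K * t)) :=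
                mul_le_mul hfM huxb (norm_nonneg _) hM.le
            _ = M * Real.exp (-(K/2)) := by rw [ht]; ring_nf
            _ < R := hKM
        · have hxV : x ∈ V (N - 1) := hNm _ (by omega)
          have h2t : (2⁻¹:ℝ)^(N-1+1) = 2*t := by
            rw [htd]
            have hNN : N - 1 + 1 = N := by omega
            rw [hNN, pow_succ]
            ring
          have hfb : ‖f x‖ < R * (1 + 2*t) := by
            have h1 : ‖f x - f x₀‖ < R * 2⁻¹^(N-1+1) := hxV
            rw [h2t] at h1
            have h4 : ‖f x‖ ≤ ‖f x - f x₀‖ + ‖f x₀‖ := by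
              calc ‖f x‖ = ‖(f x - f x₀) + f x₀‖ := by rw [sub_add_cancel]
                _ ≤ ‖f x - f x₀‖ + ‖f x₀‖ := norm_add_le _ _
            rw [← hRdef] at h4
            calc ‖f x‖ ≤ ‖f x - f x₀‖ + R := h4
              _ < R * (2*t) + R := by linarith
              _ = R * (1 + 2*t) := by ring
          have hexp : (1 + 2*t) * Real.exp (-(K * t)) ≤ 1 := exp_bound_aux hK4 ht0
          calc ‖f x * u x‖ = ‖f x‖ * ‖u x‖ := norm_mul _ _
            _ ≤ ‖f x‖ * Real.exp (-(K*t)) :=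
                mul_le_mul_of_nonneg_left huxb (norm_nonneg _)
            _ < (R * (1+2*t)) * Real.exp (-(K*t)) :=
                mul_lt_mul_of_pos_right hfb (Real.exp_pos _)
            _ = R * ((1+2*t) * Real.exp (-(K*t))) := by ring
            _ ≤ R * 1 := mul_le_mul_of_nonneg_left hexp hR.le
            _ = R := mul_one R
      exact ⟨hlt.le, fun h => absurd h hlt.ne⟩
  have hfu_norm : ‖f * u‖ = R := by
    apply le_antisymm
    · rw [ContinuousMap.norm_le _ hR.le]
      intro x
      rw [ContinuousMap.mul_apply]
      exact (hclaim x).1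
    · calc R = ‖(f * u) x₀‖ := by rw [ContinuousMap.mul_apply, hux₀, mul_one]
        _ ≤ ‖f * u‖ := ContinuousMap.norm_coe_le_norm _ _
  have hperfu : perSpec (f * u) = {f x₀} := by
    ext z
    simp only [perSpec, Set.mem_setOf_eq, Set.mem_singleton_iff]
    constructor
    · rintro ⟨⟨x, rfl⟩, hz⟩
      rw [hfu_norm] at hz
      rw [ContinuousMap.mul_apply] at hz ⊢
      exact (hclaim x).2 hz
    · rintro rfl
      refine ⟨⟨x₀, by rw [ContinuousMap.mul_apply, hux₀, mul_one]⟩, ?_⟩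
      rw [hfu_norm, hRdef]
  exact ⟨u, huA, ⟨v, hvA, huv⟩, hperu, hux₀, hperfu⟩
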